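/- Let E and F be Banach spaces, p ≥ 1, and suppose F contains closed infinite-dimensional subspaces F_1, F_2, ... spanned by disjoint blocks of an unconditional basic sequence with constant ϱ (so that ‖y_i‖ ≤ ϱ‖y_i + y_j‖ whenever y_i ∈ F_i, y_j ∈ F_j, i ≠ j). Suppose for each j there is an operator u_j ∈ L(E;F_j) \ Π_p(E;F_j), and let ũ_j : E → F be u_j followed by the inclusion F_j ↪ F. Then every nonzero finite linear combination of the ũ_j fails to be absolutely p-summing, and the ũ_j are linearly independent; hence span{ũ_j} witnesses lineability of L(E;F) \ Π_p(E;F). -/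

import Mathlib

open scoped ENNReal ZeroAtInfty

/-- `u : E →L[ℝ] F` is absolutely `p`-summing: there is `C ≥ 0` with
`∑ ‖u (x j)‖^p ≤ C · sup_{‖φ‖ ≤ 1} ∑ |φ (x j)|^p` for all finite families `x`. -/
def AbsPSumming (p : ℝ) {E F : Type*} [NormedAddCommGroup E] [NormedSpace ℝ E]
    [NormedAddCommGroup F] [NormedSpace ℝ F] (u : E →L[ℝ] F) : Prop :=
  ∃ C : ℝ, 0 ≤ C ∧ ∀ (n : ℕ) (x : Fin n → E),
    ∑ j, ‖u (x j)‖ ^ p ≤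
      C * ⨆ φ : {φ : E →L[ℝ] ℝ // ‖φ‖ ≤ 1}, ∑ j, ‖φ.1 (x j)‖ ^ p

/-- `u : E →L[ℝ] F` is absolutely `(q,1)`-summing. -/
def AbsQ1Summing (q : ℝ) {E F : Type*} [NormedAddCommGroup E] [NormedSpace ℝ E]
    [NormedAddCommGroup F] [NormedSpace ℝ F] (u : E →L[ℝ] F) : Prop :=
  ∃ C : ℝ, 0 ≤ C ∧ ∀ (n : ℕ) (x : Fin n → E),
    ∑ j, ‖u (x j)‖ ^ q ≤
      C * (⨆ φ : {φ : E →L[ℝ] ℝ // ‖φ‖ ≤ 1}, ∑ j, ‖φ.1 (x j)‖) ^ q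

/-- A subset `S` of a vector space is lineable if `S ∪ {0}` contains an
infinite-dimensional linear subspace. -/
def Lineable (𝕜 : Type*) {X : Type*} [Field 𝕜] [AddCommGroup X] [Module 𝕜 X] (S : Set X) : Prop :=
  ∃ V : Submodule 𝕜 X, ¬ Module.Finite 𝕜 V ∧ (V : Set X) ⊆ S ∪ {0}

/-- Superreflexivity, via Enflo's theorem: `X` admits an equivalent uniformly convex norm. -/
def SuperReflexive (X : Type*) [NormedAddCommGroup X] [NormedSpace ℝ X] : Prop :=
  ∃ N : X → ℝ, (∀ x, 0 ≤ N x) ∧ (∀ x, N x = 0 ↔ x = 0) ∧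
    (∀ (c : ℝ) (x : X), N (c • x) = |c| * N x) ∧ (∀ x y, N (x + y) ≤ N x + N y) ∧
    (∃ b c : ℝ, 0 < b ∧ 0 < c ∧ ∀ x, b * ‖x‖ ≤ N x ∧ N x ≤ c * ‖x‖) ∧
    (∀ ε : ℝ, 0 < ε → ∃ δ : ℝ, 0 < δ ∧ ∀ x y, N x ≤ 1 → N y ≤ 1 →
      ε ≤ N (x - y) → N (x + y) ≤ 2 - δ)

/-- `e` is an unconditional basic sequence with unconditional constant `ϱ`:
expansions are unique and sign changes of a convergent expansion converge,
with norm at most `ϱ` times the original. -/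
def IsUncondBasicSeq {ι X : Type*} [NormedAddCommGroup X] [NormedSpace ℝ X]
    (e : ι → X) (ϱ : ℝ) : Prop :=
  (∀ a : ι → ℝ, HasSum (fun n => a n • e n) 0 → ∀ n, a n = 0) ∧
  (∀ (a : ι → ℝ) (x : X), HasSum (fun n => a n • e n) x →
    ∀ ε : ι → ℝ, (∀ n, ε n = 1 ∨ ε n = -1) →
      ∃ y, HasSum (fun n => (ε n * a n) • e n) y ∧ ‖y‖ ≤ ϱ * ‖x‖)

/-- `e` is an unconditional Schauder basis of `X` with unconditional constant `ϱ`. -/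
def IsUncondBasis {X : Type*} [NormedAddCommGroup X] [NormedSpace ℝ X]
    (e : ℕ → X) (ϱ : ℝ) : Prop :=
  IsUncondBasicSeq e ϱ ∧ ∀ x : X, ∃ a : ℕ → ℝ, HasSum (fun n => a n • e n) x

/-- The parameter `μ_{E,(x_n)} = inf {t : (a_j) ∈ ℓ_t whenever ∑ a_j x_j converges}`,
computed in `ℝ≥0∞` (so that it is `∞` when no such `t` exists). -/
noncomputable def muPar {ι E : Type*} [NormedAddCommGroup E] [NormedSpace ℝ E]
    (x : ι → E) : ℝ≥0∞ :=
  sInf {s : ℝ≥0∞ | ∃ t : ℝ, s = ENNReal.ofReal t ∧ 0 < t ∧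
    ∀ a : ι → ℝ, (∃ y, HasSum (fun j => a j • x j) y) → Summable fun j => |a j| ^ t}

/-- `F` has cotype `s`. -/
def HasCotype (s : ℝ) (F : Type*) [NormedAddCommGroup F] [NormedSpace ℝ F] : Prop :=
  ∃ C : ℝ, 0 < C ∧ ∀ (n : ℕ) (y : Fin n → F),
    (∑ i, ‖y i‖ ^ s) ^ (1 / s) ≤
      C * ((∑ ε : Fin n → Bool, ‖∑ i, (if ε i then (1:ℝ) else -1) • y i‖ ^ 2) / 2 ^ n)
        ^ (1 / 2 : ℝ)

/-- `cot F = inf {s ≥ 2 : F has cotype s}`, computed in `ℝ≥0∞`. -/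
noncomputable def cotPar (F : Type*) [NormedAddCommGroup F] [NormedSpace ℝ F] : ℝ≥0∞ :=
  sInf {s : ℝ≥0∞ | ∃ r : ℝ, s = ENNReal.ofReal r ∧ 2 ≤ r ∧ HasCotype r F}


section MainProof

variable {E F : Type*} [NormedAddCommGroup E] [NormedSpace ℝ E]
  [NormedAddCommGroup F] [NormedSpace ℝ F]

lemma absPSumming_zero {p : ℝ} (hp : 1 ≤ p) : AbsPSumming p (0 : E →L[ℝ] F) := by
  refine ⟨0, le_refl 0, fun n x => ?_⟩
  have hp0 : p ≠ 0 := by linarith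
  simp [Real.zero_rpow hp0]

end MainProof

lemma rho_ge_one {F : Type*} [NormedAddCommGroup F] [NormedSpace ℝ F]
    {e : ℕ → F} {ϱ : ℝ} (hbasic : IsUncondBasicSeq e ϱ) : 1 ≤ ϱ := by
  classical
  set a : ℕ → ℝ := fun n => if n = 0 then 1 else 0 with ha
  have hf : (fun n => a n • e n) = fun n => if n = 0 then e 0 else 0 := by
    funext n; by_cases h : n = 0 <;> simp [a, h]
  have hsum : HasSum (fun n => a n • e n) (e 0) := by
    rw [hf]; exact hasSum_ite_eq 0 (e 0)
  have hne : e 0 ≠ 0 := by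
    intro h
    have h0 : HasSum (fun n => a n • e n) 0 := by
      rw [hf, h]; simpa using hasSum_ite_eq 0 (0 : F)
    have := hbasic.1 a h0 0
    simp [a] at this
  obtain ⟨y', hs, hn⟩ := hbasic.2 a (e 0) hsum (fun _ => 1) (fun _ => Or.inl rfl)
  have hy' : y' = e 0 := hs.unique (by simpa using hsum)
  rw [hy'] at hn
  have hpos : (0:ℝ) < ‖e 0‖ := norm_pos_iff.mpr hne
  exact (mul_le_mul_iff_of_pos_right hpos).mp (by linarith)

lemma block_span {F : Type*} [NormedAddCommGroup F] [NormedSpace ℝ F]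
    {e : ℕ → F} {ϱ : ℝ} (hbasic : IsUncondBasicSeq e ϱ)
    {A : ℕ → Set ℕ} (hA : Pairwise fun i j => Disjoint (A i) (A j))
    (s : Finset ℕ) (y : ℕ → F) (hy : ∀ k ∈ s, y k ∈ Submodule.span ℝ (e '' A k))
    {k₀ : ℕ} (hk₀ : k₀ ∈ s) :
    2 * ‖y k₀‖ ≤ (1 + ϱ) * ‖∑ k ∈ s, y k‖ := by
  classical
  have hrep : ∀ k, ∃ l : ℕ →₀ ℝ, ↑l.support ⊆ A k ∧
      Finsupp.linearCombination ℝ e l = (if k ∈ s then y k else 0) := by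
    intro k
    by_cases hk : k ∈ s
    · obtain ⟨l, hl, hle⟩ := (Finsupp.mem_span_image_iff_linearCombination ℝ).mp (hy k hk)
      exact ⟨l, by simpa [Finsupp.mem_supported] using hl, by simp [hk, hle]⟩
    · exact ⟨0, by simp, by simp [hk]⟩
  choose l hlsupp hlc using hrep
  set T : Finset ℕ := s.biUnion fun k => (l k).support with hT
  have hLT : ∀ k ∈ s, (l k).support ⊆ T := fun k hk => Finset.subset_biUnion_of_mem (fun k => (l k).support) hk
  set c : ℕ → ℝ := fun i => ∑ k ∈ s, l k i with hc
  have hcT : ∀ i ∉ T, c i = 0 := by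
    intro i hi
    refine Finset.sum_eq_zero fun k hk => ?_
    by_contra h
    exact hi (hLT k hk (Finsupp.mem_support_iff.mpr h))
  have swap : ∀ ε : ℕ → ℝ,
      ∑ i ∈ T, (ε i * c i) • e i = ∑ k ∈ s, ∑ i ∈ T, (ε i * l k i) • e i := by
    intro ε
    have h1 : ∀ i, (ε i * c i) • e i = ∑ k ∈ s, (ε i * l k i) • e i := fun i => by
      rw [hc]; rw [Finset.mul_sum, Finset.sum_smul]
    simp_rw [h1]
    exact Finset.sum_comm
  have key : ∀ (ε : ℕ → ℝ), ∀ k ∈ s, ∀ σ : ℝ, (∀ i ∈ (l k).support, ε i = σ) →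
      ∑ i ∈ T, (ε i * l k i) • e i = σ • y k := by
    intro ε k hk σ hσ
    have h1 : ∑ i ∈ T, (ε i * l k i) • e i = ∑ i ∈ (l k).support, (ε i * l k i) • e i :=
      (Finset.sum_subset (hLT k hk) fun i _ hi => by
        simp [Finsupp.notMem_support_iff.mp hi]).symm
    rw [h1]
    have h2 : ∑ i ∈ (l k).support, (ε i * l k i) • e i
        = σ • ∑ i ∈ (l k).support, l k i • e i := by
      rw [Finset.smul_sum]
      refine Finset.sum_congr rfl fun i hi => ?_
      rw [hσ i hi, mul_smul]
    rw [h2]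
    have h3 := hlc k
    rw [if_pos hk] at h3
    rw [show ∑ i ∈ (l k).support, l k i • e i = Finsupp.linearCombination ℝ e (l k) by
      simp [Finsupp.linearCombination_apply, Finsupp.sum], h3]
  have hsumT : HasSum (fun i => c i • e i) (∑ i ∈ T, c i • e i) :=
    hasSum_sum_of_ne_finset_zero fun i hi => by rw [hcT i hi, zero_smul]
  have e1 : ∑ i ∈ T, c i • e i = ∑ k ∈ s, y k := by
    calc ∑ i ∈ T, c i • e i = ∑ i ∈ T, ((1:ℝ) * c i) • e i := by simp
      _ = ∑ k ∈ s, ∑ i ∈ T, ((1:ℝ) * l k i) • e i := swap _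
      _ = ∑ k ∈ s, (1:ℝ) • y k :=
          Finset.sum_congr rfl fun k hk => key _ k hk 1 fun _ _ => rfl
      _ = ∑ k ∈ s, y k := by simp
  rw [e1] at hsumT
  set ε : ℕ → ℝ := fun i => if i ∈ A k₀ then (1:ℝ) else -1 with hε
  have hεs : ∀ n, ε n = 1 ∨ ε n = -1 := fun n => by
    by_cases h : n ∈ A k₀ <;> simp [ε, h]
  obtain ⟨y', hy's, hy'n⟩ := hbasic.2 c _ hsumT ε hεs
  have h2 : HasSum (fun i => (ε i * c i) • e i) (∑ i ∈ T, (ε i * c i) • e i) :=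
    hasSum_sum_of_ne_finset_zero fun i hi => by rw [hcT i hi, mul_zero, zero_smul]
  have hy'eq : y' = ∑ i ∈ T, (ε i * c i) • e i := hy's.unique h2
  have e2 : ∑ i ∈ T, (ε i * c i) • e i
      = ∑ k ∈ s, (if k = k₀ then (1:ℝ) else -1) • y k := by
    rw [swap ε]
    refine Finset.sum_congr rfl fun k hk => ?_
    by_cases hkk : k = k₀
    · subst hkk
      rw [if_pos rfl]
      exact key ε k hk 1 fun i hi => if_pos (hlsupp k (Finset.mem_coe.mpr hi))
    · rw [if_neg hkk]
      refine key ε k hk (-1) fun i hi => if_neg ?_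
      exact Set.disjoint_left.mp (hA hkk) (hlsupp k (Finset.mem_coe.mpr hi))
  have hfinal : (2:ℝ) • y k₀ = (∑ k ∈ s, y k) + y' := by
    rw [hy'eq, e2, ← Finset.sum_add_distrib]
    have hterm : ∀ k ∈ s, y k + (if k = k₀ then (1:ℝ) else -1) • y k
        = if k = k₀ then (2:ℝ) • y k else 0 := by
      intro k _
      by_cases h : k = k₀ <;> simp [h, two_smul]
    rw [Finset.sum_congr rfl hterm, Finset.sum_ite_eq' s k₀ fun k => (2:ℝ) • y k,
      if_pos hk₀]
  calc 2 * ‖y k₀‖ = ‖(2:ℝ) • y k₀‖ := by rw [norm_smul]; simp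
    _ = ‖(∑ k ∈ s, y k) + y'‖ := by rw [hfinal]
    _ ≤ ‖∑ k ∈ s, y k‖ + ‖y'‖ := norm_add_le _ _
    _ ≤ (1 + ϱ) * ‖∑ k ∈ s, y k‖ := by linarith

lemma block_closure {F : Type*} [NormedAddCommGroup F] [NormedSpace ℝ F]
    {e : ℕ → F} {ϱ : ℝ} (hbasic : IsUncondBasicSeq e ϱ)
    {A : ℕ → Set ℕ} (hA : Pairwise fun i j => Disjoint (A i) (A j))
    (s : Finset ℕ) (y : ℕ → F)
    (hy : ∀ k ∈ s, y k ∈ (Submodule.span ℝ (e '' A k)).topologicalClosure)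
    {k₀ : ℕ} (hk₀ : k₀ ∈ s) :
    2 * ‖y k₀‖ ≤ (1 + ϱ) * ‖∑ k ∈ s, y k‖ := by
  classical
  have h1ϱ : 1 ≤ ϱ := rho_ge_one hbasic
  refine le_of_forall_pos_le_add fun εp hεp => ?_
  have hDpos : (0:ℝ) < (1 + ϱ) * s.card + 2 := by
    have : (0:ℝ) ≤ (1 + ϱ) * s.card := mul_nonneg (by linarith) (Nat.cast_nonneg _)
    linarith
  set δ : ℝ := εp / ((1 + ϱ) * s.card + 2) with hδ
  have hδpos : 0 < δ := div_pos hεp hDpos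
  have happrox : ∀ k, ∃ z : F, k ∈ s → z ∈ Submodule.span ℝ (e '' A k) ∧ ‖y k - z‖ ≤ δ := by
    intro k
    by_cases hk : k ∈ s
    · have hmem : y k ∈ closure (Submodule.span ℝ (e '' A k) : Set F) := by
        rw [← Submodule.topologicalClosure_coe]; exact hy k hk
      obtain ⟨z, hz, hdz⟩ := Metric.mem_closure_iff.mp hmem δ hδpos
      exact ⟨z, fun _ => ⟨hz, by rw [← dist_eq_norm]; exact hdz.le⟩⟩
    · exact ⟨0, fun h => absurd h hk⟩
  choose z hz using happrox
  have hspan : ∀ k ∈ s, z k ∈ Submodule.span ℝ (e '' A k) := fun k hk => (hz k hk).1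
  have hdist : ∀ k ∈ s, ‖y k - z k‖ ≤ δ := fun k hk => (hz k hk).2
  have hineq := block_span hbasic hA s z hspan hk₀
  have hsumdiff : ‖∑ k ∈ s, z k‖ ≤ ‖∑ k ∈ s, y k‖ + s.card * δ := by
    have hdec : ∑ k ∈ s, z k = ∑ k ∈ s, y k + ∑ k ∈ s, (z k - y k) := by
      rw [← Finset.sum_add_distrib]
      exact Finset.sum_congr rfl fun k _ => by abel
    calc ‖∑ k ∈ s, z k‖ ≤ ‖∑ k ∈ s, y k‖ + ‖∑ k ∈ s, (z k - y k)‖ := by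
          rw [hdec]; exact norm_add_le _ _
      _ ≤ ‖∑ k ∈ s, y k‖ + ∑ k ∈ s, ‖z k - y k‖ :=
          add_le_add le_rfl (norm_sum_le _ _)
      _ ≤ ‖∑ k ∈ s, y k‖ + ∑ k ∈ s, δ := by
          gcongr with k hk
          rw [norm_sub_rev]; exact hdist k hk
      _ = ‖∑ k ∈ s, y k‖ + s.card * δ := by rw [Finset.sum_const, nsmul_eq_mul]
  have h0 : ‖y k₀‖ ≤ ‖z k₀‖ + ‖y k₀ - z k₀‖ := by
    calc ‖y k₀‖ = ‖z k₀ + (y k₀ - z k₀)‖ := by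
          exact congrArg _ (by abel)
      _ ≤ ‖z k₀‖ + ‖y k₀ - z k₀‖ := norm_add_le _ _
  have hδle : ‖y k₀ - z k₀‖ ≤ δ := hdist k₀ hk₀
  have hδval : ((1 + ϱ) * s.card + 2) * δ = εp := by
    rw [hδ]; field_simp
  have hmul : (1 + ϱ) * ‖∑ k ∈ s, z k‖ ≤ (1 + ϱ) * (‖∑ k ∈ s, y k‖ + s.card * δ) :=
    mul_le_mul_of_nonneg_left hsumdiff (by linarith)
  nlinarith [hineq, hmul, h0, hδle, hδval]

/-- suppose `F` contains closed infinite-dimensional subspaces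
`F j` spanned by disjoint blocks of an unconditional basic sequence with constant
`ϱ`, so that `‖y‖ ≤ ϱ ‖y + z‖` for `y ∈ F i`, `z ∈ F j`, `i ≠ j`. If for each `j`
there is `u j ∈ L(E;F j) \ Π_p(E;F j)` and `ũ j` is `u j` followed by the inclusion
`F j ↪ F`, then every nonzero finite linear combination of the `ũ j` fails to be
absolutely `p`-summing and the `ũ j` are linearly independent; hence their span
witnesses lineability of `L(E;F) \ Π_p(E;F)`. -/
theorem stmt_10 {E F : Type*} [NormedAddCommGroup E] [NormedSpace ℝ E] [CompleteSpace E]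
    [NormedAddCommGroup F] [NormedSpace ℝ F] [CompleteSpace F]
    (p : ℝ) (hp : 1 ≤ p)
    (e : ℕ → F) (ϱ : ℝ) (hbasic : IsUncondBasicSeq e ϱ)
    (A : ℕ → Set ℕ) (hA : Pairwise fun i j => Disjoint (A i) (A j))
    (Fsub : ℕ → Submodule ℝ F)
    (hFdef : ∀ j, Fsub j = (Submodule.span ℝ (e '' A j)).topologicalClosure)
    (hFinf : ∀ j, ¬ FiniteDimensional ℝ (Fsub j))
    (hϱ : ∀ i j, i ≠ j → ∀ y ∈ Fsub i, ∀ z ∈ Fsub j, ‖y‖ ≤ ϱ * ‖y + z‖)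
    (u : (j : ℕ) → (E →L[ℝ] Fsub j)) (hu : ∀ j, ¬ AbsPSumming p (u j)) :
    (∀ (n : ℕ) (a : Fin n → ℝ), (∃ k, a k ≠ 0) →
      ¬ AbsPSumming p (∑ k : Fin n, a k • ((Fsub k).subtypeL.comp (u k)))) ∧
    (LinearIndependent ℝ fun j : ℕ => (Fsub j).subtypeL.comp (u j)) ∧
    Lineable ℝ {v : E →L[ℝ] F | ¬ AbsPSumming p v} := by
  classical
  have h1ϱ : 1 ≤ ϱ := rho_ge_one hbasic
  have block : ∀ (s : Finset ℕ) (y : ℕ → F), (∀ k ∈ s, y k ∈ Fsub k) → ∀ k₀ ∈ s,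
      2 * ‖y k₀‖ ≤ (1 + ϱ) * ‖∑ k ∈ s, y k‖ := by
    intro s y hy k₀ hk₀
    exact block_closure hbasic hA s y (fun k hk => (hFdef k) ▸ hy k hk) hk₀
  have key : ∀ (s : Finset ℕ) (a : ℕ → ℝ) (k₀ : ℕ), k₀ ∈ s → a k₀ ≠ 0 →
      ¬ AbsPSumming p (∑ k ∈ s, a k • ((Fsub k).subtypeL.comp (u k))) := by
    rintro s a k₀ hk₀ ha ⟨C, hC0, hC⟩
    apply hu k₀
    set V : E →L[ℝ] F := ∑ k ∈ s, a k • ((Fsub k).subtypeL.comp (u k)) with hV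
    have hapos : (0:ℝ) < |a k₀| := abs_pos.mpr ha
    set c : ℝ := (1 + ϱ) / (2 * |a k₀|) with hcdef
    have hcpos : 0 < c := div_pos (by linarith) (by positivity)
    refine ⟨c ^ p * C, mul_nonneg (Real.rpow_nonneg hcpos.le p) hC0, fun n x => ?_⟩
    have hpt : ∀ j : Fin n, ‖u k₀ (x j)‖ ≤ c * ‖V (x j)‖ := by
      intro j
      have hb := block s (fun k => a k • ((u k (x j) : F)))
        (fun k hk => Submodule.smul_mem _ _ (SetLike.coe_mem _)) k₀ hk₀
      have happ : V (x j) = ∑ k ∈ s, a k • ((u k (x j) : F)) := by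
        rw [hV]
        simp [ContinuousLinearMap.sum_apply]
      rw [happ]
      have h1 : ‖a k₀ • ((u k₀ (x j) : F))‖ = |a k₀| * ‖u k₀ (x j)‖ := by
        rw [norm_smul, Real.norm_eq_abs, Submodule.norm_coe]
      try simp only at hb
      rw [h1] at hb
      have h2 : (0:ℝ) < 2 * |a k₀| := by positivity
      rw [hcdef, div_mul_eq_mul_div, le_div_iff₀ h2]
      nlinarith [hb]
    calc ∑ j, ‖u k₀ (x j)‖ ^ p
        ≤ ∑ j, (c * ‖V (x j)‖) ^ p :=
          Finset.sum_le_sum fun j _ =>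
            Real.rpow_le_rpow (norm_nonneg _) (hpt j) (by linarith)
      _ = ∑ j, c ^ p * ‖V (x j)‖ ^ p :=
          Finset.sum_congr rfl fun j _ => Real.mul_rpow hcpos.le (norm_nonneg _)
      _ = c ^ p * ∑ j, ‖V (x j)‖ ^ p := by rw [Finset.mul_sum]
      _ ≤ c ^ p * (C * ⨆ φ : {φ : E →L[ℝ] ℝ // ‖φ‖ ≤ 1}, ∑ j, ‖φ.1 (x j)‖ ^ p) :=
          mul_le_mul_of_nonneg_left (hC n x) (Real.rpow_nonneg hcpos.le p)
      _ = c ^ p * C * ⨆ φ : {φ : E →L[ℝ] ℝ // ‖φ‖ ≤ 1}, ∑ j, ‖φ.1 (x j)‖ ^ p :=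
          (mul_assoc _ _ _).symm
  refine ⟨?_, ?_, ?_⟩
  · rintro n a ⟨k, hk⟩ h
    set a' : ℕ → ℝ := fun m => if h : m < n then a ⟨m, h⟩ else 0 with ha'
    have hsum : (∑ k : Fin n, a k • ((Fsub (k:ℕ)).subtypeL.comp (u (k:ℕ))))
        = ∑ m ∈ Finset.range n, a' m • ((Fsub m).subtypeL.comp (u m)) := by
      rw [← Fin.sum_univ_eq_sum_range (fun m => a' m • ((Fsub m).subtypeL.comp (u m))) n]
      refine Finset.sum_congr rfl fun i _ => ?_
      simp [a', i.isLt]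
    rw [hsum] at h
    exact key (Finset.range n) a' k (Finset.mem_range.mpr k.isLt)
      (by simpa [a', k.isLt] using hk) h
  · rw [linearIndependent_iff]
    intro l hl
    by_contra hne
    obtain ⟨k₀, hk₀⟩ : ∃ k, l k ≠ 0 := by
      by_contra hc; push_neg at hc; exact hne (Finsupp.ext hc)
    apply key l.support (fun k => l k) k₀ (Finsupp.mem_support_iff.mpr hk₀) hk₀
    have hzero : (∑ k ∈ l.support, l k • ((Fsub k).subtypeL.comp (u k)))
        = (0 : E →L[ℝ] F) := by
      rw [Finsupp.linearCombination_apply, Finsupp.sum] at hl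
      exact hl
    rw [show (∑ k ∈ l.support, (fun k => l k) k • ((Fsub k).subtypeL.comp (u k)))
        = (0 : E →L[ℝ] F) from hzero]
    exact absPSumming_zero hp
  · set v : ℕ → (E →L[ℝ] F) := fun j => (Fsub j).subtypeL.comp (u j) with hv
    refine ⟨Submodule.span ℝ (Set.range v), ?_, ?_⟩
    · intro hfin
      have hind : LinearIndependent ℝ v := by
        rw [linearIndependent_iff]
        intro l hl
        by_contra hne
        obtain ⟨k₀, hk₀⟩ : ∃ k, l k ≠ 0 := by
          by_contra hc; push_neg at hc; exact hne (Finsupp.ext hc)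
        apply key l.support (fun k => l k) k₀ (Finsupp.mem_support_iff.mpr hk₀) hk₀
        have hzero : (∑ k ∈ l.support, l k • v k) = (0 : E →L[ℝ] F) := by
          rw [Finsupp.linearCombination_apply, Finsupp.sum] at hl
          exact hl
        rw [show (∑ k ∈ l.support, (fun k => l k) k • ((Fsub k).subtypeL.comp (u k)))
            = (0 : E →L[ℝ] F) from hzero]
        exact absPSumming_zero hp
      have hind' : LinearIndependent ℝ
          (fun j => (⟨v j, Submodule.subset_span (Set.mem_range_self j)⟩ :
            Submodule.span ℝ (Set.range v))) :=
        hind.of_comp (Submodule.span ℝ (Set.range v)).subtype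
      have : Finite ℕ := hind'.finite
      exact not_finite ℕ
    · rintro w hw
      by_cases hw0 : w = 0
      · exact Or.inr (by simp [hw0])
      · obtain ⟨l, hl⟩ := Finsupp.mem_span_range_iff_exists_finsupp.mp hw
        obtain ⟨k₀, hk₀⟩ : ∃ k, l k ≠ 0 := by
          by_contra hc; push_neg at hc
          apply hw0
          rw [← hl]
          have : l = 0 := Finsupp.ext hc
          rw [this]; simp
        refine Or.inl ?_
        show ¬ AbsPSumming p w
        rw [← hl, Finsupp.sum]
        exact key l.support (fun k => l k) k₀ (Finsupp.mem_support_iff.mpr hk₀) hk₀
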